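/- For every δ > 0 there exists η₁ > 0 such that for all η ∈ (0, η₁) and every s ∈ ℂ satisfying the characteristic equation f_η(s)² − f_η(s)·e^{−s} − 1 = 0, one has Re(s) ≤ −ln 2 + δ. -/

import Mathlib

/-- `λ₁(η,s) = (1 + √(1+4ηs))/(2η)`, principal branch of the complex square root. -/
noncomputable def lam1 (η : ℝ) (s : ℂ) : ℂ :=
  (1 + (1 + 4 * (η : ℂ) * s) ^ ((1 : ℂ) / 2)) / (2 * (η : ℂ))

/-- `λ₂(η,s) = (1 − √(1+4ηs))/(2η)`. -/
noncomputable def lam2 (η : ℝ) (s : ℂ) : ℂ :=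
  (1 - (1 + 4 * (η : ℂ) * s) ^ ((1 : ℂ) / 2)) / (2 * (η : ℂ))

/-- Transfer function of the viscous transport system. -/
noncomputable def f (η : ℝ) (s : ℂ) : ℂ :=
  (lam1 η s - lam2 η s) /
    (lam1 η s * Complex.exp (-(lam2 η s)) - lam2 η s * Complex.exp (-(lam1 η s)))

open Complex

lemma re_sqrt_nonneg (a : ℂ) : 0 ≤ (a ^ ((1:ℂ)/2)).re := by
  rcases eq_or_ne a 0 with h | h
  · simp [h, Complex.zero_cpow (by norm_num : ((1:ℂ)/2) ≠ 0)]
  · rw [Complex.cpow_def_of_ne_zero h, Complex.exp_re]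
    apply mul_nonneg (Real.exp_nonneg _)
    have him : (Complex.log a * ((1:ℂ)/2)).im = a.arg / 2 := by
      simp [Complex.mul_im, Complex.log_im, Complex.log_re]
      ring
    rw [him]
    apply Real.cos_nonneg_of_mem_Icc
    constructor
    · have := Complex.neg_pi_lt_arg a
      linarith [Real.pi_pos]
    · have := Complex.arg_le_pi a
      linarith [Real.pi_pos]

lemma sqrt_mul_self' (a : ℂ) (h : a ≠ 0) : a ^ ((1:ℂ)/2) * a ^ ((1:ℂ)/2) = a := by
  rw [← Complex.cpow_add _ _ h]
  norm_num

lemma f_formula (η : ℝ) (hη : 0 < η) (s : ℂ) (r z : ℂ)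
    (hr : r = (1 + 4 * (η : ℂ) * s) ^ ((1 : ℂ) / 2))
    (hz : z = (r - 1) / (2 * (η : ℂ))) :
    f η s = (2 * r * Complex.exp (-z)) /
      ((1 + r) - (1 - r) * Complex.exp (-(2*z) - (1/η : ℂ))) := by
  have hη0 : (η : ℂ) ≠ 0 := by exact_mod_cast hη.ne'
  have h2η : (2 * (η : ℂ)) ≠ 0 := by simpa using hη0
  have e2 : -(lam2 η s) = z := by
    rw [lam2, hz, ← hr]; ring
  have e1 : -(lam1 η s) = z + (-(2*z) - (1/η : ℂ)) := by
    rw [lam1, hz, ← hr]; field_simp; ring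
  have hD : lam1 η s * Complex.exp (-(lam2 η s)) - lam2 η s * Complex.exp (-(lam1 η s))
      = (Complex.exp z / (2 * (η:ℂ))) * ((1 + r) - (1 - r) * Complex.exp (-(2*z) - (1/η : ℂ))) := by
    rw [e1, e2, Complex.exp_add, lam1, lam2, ← hr]; ring
  have hN : lam1 η s - lam2 η s = r / η := by
    rw [lam1, lam2, ← hr]; field_simp; ring
  rw [f, hD, hN, ← div_div]
  congr 1
  rw [div_div_eq_mul_div, div_eq_iff (Complex.exp_ne_zero z), div_mul_eq_mul_div]
  have hzz : Complex.exp (-z) * Complex.exp z = 1 := by rw [← Complex.exp_add]; simp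
  rw [show 2*r*Complex.exp (-z) * Complex.exp z = 2*r*(Complex.exp (-z) * Complex.exp z) by ring, hzz]
  field_simp

lemma aux_exp_small (ρ η : ℝ) (hη : 0 < η) (hη' : η ≤ 1/100) (hρ : 0.9 ≤ ρ) :
    3 * ρ * Real.exp (-(ρ/η)) ≤ η := by
  set t := ρ/η with ht_def
  have htpos : 0 < t := by positivity
  have ht : 90 ≤ t := by
    rw [ht_def, le_div_iff₀ hη]; nlinarith
  have hexpt : t*t/4 ≤ Real.exp t := by
    have h1 : t/2 + 1 ≤ Real.exp (t/2) := Real.add_one_le_exp _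
    have h2 : Real.exp (t/2) * Real.exp (t/2) = Real.exp t := by
      rw [← Real.exp_add]; ring_nf
    nlinarith [Real.exp_pos (t/2)]
  have hρt : ρ = η * t := by rw [ht_def]; field_simp
  have h3t : 3*t*t ≤ t * Real.exp t := by nlinarith
  rw [hρt, Real.exp_neg]
  rw [mul_inv_le_iff₀ (Real.exp_pos t)]
  nlinarith [Real.exp_pos t]

lemma arρ9 (ρ τ : ℝ) (h0 : 0 ≤ ρ) (h : 0.97 ≤ ρ*ρ - τ*τ) : 0.9 ≤ ρ := by
  nlinarith [sq_nonneg τ]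

lemma arAub (A ρ τ : ℝ) (hA : 0 ≤ A) (hsq : A*A = ρ*ρ + τ*τ)
    (h : 0.97 ≤ ρ*ρ - τ*τ) (h0 : 0 ≤ ρ) : A ≤ 1.5*ρ := by
  nlinarith

lemma arG (G D2 A ρ η : ℝ) (hη : 0 < η) (hη' : η ≤ 1/100) (hρ : 0.9 ≤ ρ)
    (hG : 0 ≤ G) (hA1 : ρ ≤ A) (hA2 : A ≤ 1.5*ρ) (hD1 : 1 + ρ - η ≤ D2)
    (hD2 : D2 ≤ 3*ρ) (hGD : G * D2 = 2*A) : G ≤ 3 ∧ 2/3 ≤ G := by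
  constructor
  · nlinarith
  · nlinarith

lemma arX (F G X : ℝ) (hF : 2/5 < F) (hF' : F ≤ 5/2) (hG3 : G ≤ 3)
    (hG23 : 2/3 ≤ G) (hX : 0 < X) (h : F = G * X) : 2/15 < X ∧ X ≤ 15/4 := by
  constructor
  · nlinarith
  · nlinarith

lemma arInv (a b : ℝ) (h : a*b = 1) (hb : 15 < b) (ha : 0 < a) : a < 2/15 := by
  nlinarith

lemma arτ (ρ τ x η sre : ℝ) (hη : 0 < η) (hη' : η ≤ 1/100)
    (hre2 : ρ*ρ - τ*τ = 1 + 4*η*sre) (hρx : ρ = 1 + 2*η*x) (hx : x ≤ 3)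
    (hx' : -3 ≤ x) (hs : -0.7 < sre) : τ*τ ≤ 16*η := by
  have hρρ : ρ*ρ = 1 + 4*(η*x) + 4*((η*x)*(η*x)) := by rw [hρx]; ring
  have h4 : η*x ≤ 3*η := by nlinarith
  have h5 : -(3*η) ≤ η*x := by nlinarith
  have h6 : (η*x)*(η*x) ≤ 9*(η*η) := by nlinarith [mul_nonneg (by linarith : (0:ℝ) ≤ 3*η - η*x) (by linarith : (0:ℝ) ≤ 3*η + η*x)]
  have h7 : η*η ≤ η/100 := by nlinarith
  have h8 : 0 ≤ η*(sre+0.7) := mul_nonneg hη.le (by linarith)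
  nlinarith [h6]

lemma arR1 (R ρ τ x η σ : ℝ) (hη : 0 < η) (hη' : η ≤ 1/100) (hσ : σ*σ = η)
    (hσ0 : 0 < σ) (hR : 0 ≤ R) (hsq : R*R = (ρ-1)*(ρ-1) + τ*τ)
    (hρx : ρ = 1 + 2*η*x) (hx : x ≤ 3) (hx' : -3 ≤ x) (hτ : τ*τ ≤ 16*η) :
    R ≤ 5*σ := by
  have hρρ : (ρ-1)*(ρ-1) = 4*((η*x)*(η*x)) := by rw [hρx]; ring
  have h4 : η*x ≤ 3*η := by nlinarith
  have h5 : -(3*η) ≤ η*x := by nlinarith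
  have h6 : (η*x)*(η*x) ≤ 9*(η*η) := by nlinarith [mul_nonneg (by linarith : (0:ℝ) ≤ 3*η - η*x) (by linarith : (0:ℝ) ≤ 3*η + η*x)]
  have h7 : η*η ≤ η/100 := by nlinarith
  have h8 : R*R ≤ 17*(σ*σ) := by nlinarith
  nlinarith [mul_pos hσ0 hσ0]

lemma arg1 (A D B C σ η ρ : ℝ) (hη : 0 < η) (hη' : η ≤ 1/100) (hρ : 0.9 ≤ ρ)
    (hσ : 0 < σ) (hσ' : σ*σ = η) (hA : 0 ≤ A) (hB0 : 0 ≤ B) (hC0 : 0 ≤ C)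
    (h1 : A*D = B*C) (hB : B ≤ 5*σ) (hC : C ≤ 2) (hD : 1 + ρ - η ≤ D) :
    A ≤ 7*σ := by
  nlinarith [mul_le_mul hB hC hC0 (by linarith : (0:ℝ) ≤ 5*σ)]
lemma arExp3 : (15:ℝ) < Real.exp 3 := by
  have h3 : Real.exp 3 = Real.exp 1 ^ (3:ℕ) := by
    rw [← Real.exp_nat_mul]; norm_num
  have h4 : (2.7:ℝ)^(3:ℕ) < Real.exp 1^(3:ℕ) :=
    pow_lt_pow_left₀ (by nlinarith [Real.exp_one_gt_d9]) (by norm_num) (by norm_num)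
  rw [h3]; nlinarith [h4]

lemma ary (τ η y σ : ℝ) (hτy : τ = 2*η*y) (hτ : τ*τ ≤ 16*η) (hσ : σ*σ = η) :
    (η*y)*(η*y) ≤ 4*(σ*σ) := by
  have h : τ*τ = 4*((η*y)*(η*y)) := by rw [hτy]; ring
  linarith

lemma aru (u η x y : ℝ) (hη : 0 < η) (hux : u = η*(x*x-y*y)) (hx : x ≤ 3)
    (hx' : -3 ≤ x) : u ≤ 9*η := by
  have h1 : 0 ≤ 9 - x*x := by nlinarith
  nlinarith [mul_nonneg hη.le (mul_self_nonneg y), mul_nonneg hη.le h1]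

lemma arv (v η x y σ : ℝ) (hσ : σ*σ = η) (hσ0 : 0 < σ)
    (hvy : v = η*(x*y+y*x)) (hx : x ≤ 3) (hx' : -3 ≤ x)
    (hy2 : (η*y)*(η*y) ≤ 4*(σ*σ)) : |v| ≤ 12*σ := by
  have h1 : η*y ≤ 2*σ := by nlinarith
  have h2 : -(2*σ) ≤ η*y := by nlinarith
  have hv2 : v = 2*(x*(η*y)) := by rw [hvy]; ring
  rw [hv2, abs_le]
  have p1 : 0 ≤ (3-x)*(2*σ-η*y) := mul_nonneg (by linarith) (by linarith)
  have p2 : 0 ≤ (3+x)*(2*σ+η*y) := mul_nonneg (by linarith) (by linarith)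
  have p3 : 0 ≤ (3-x)*(2*σ+η*y) := mul_nonneg (by linarith) (by linarith)
  have p4 : 0 ≤ (3+x)*(2*σ-η*y) := mul_nonneg (by linarith) (by linarith)
  constructor <;> nlinarith

lemma arPu (u : ℝ) : (1-u) * Real.exp u ≤ 1 := by
  have h1 := Real.add_one_le_exp (-u)
  have h2 : Real.exp (-u) * Real.exp u = 1 := by rw [← Real.exp_add]; simp
  nlinarith [Real.exp_pos u]

lemma arP (P u σ η : ℝ) (hη : 0 < η) (hσ : σ*σ = η) (hσ0 : 0 < σ)
    (hσ1 : σ < 1/1000) (hP : 0 < P) (hPu : (1-u)*P ≤ 1) (hu : u ≤ 9*η) :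
    P ≤ 1+2*σ := by
  have hσσ : σ*σ ≤ σ/1000 := by nlinarith
  have hu' : u ≤ σ/100 := by nlinarith
  have h2 : P*(1-σ/100) ≤ P*(1-u) := by nlinarith
  have h3 : P*(1-σ/100) ≤ 1 := by nlinarith
  have h4 : (1:ℝ) ≤ (1+2*σ)*(1-σ/100) := by nlinarith
  have h5 : (0:ℝ) < 1-σ/100 := by linarith
  have h6 : P*(1-σ/100) ≤ (1+2*σ)*(1-σ/100) := by linarith
  exact le_of_mul_le_mul_right (by linarith [h6]) h5

lemma arRP (u : ℝ) : |1 - Real.exp (-u)| * Real.exp u = |Real.exp u - 1| := by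
  have h2 : Real.exp (-u) * Real.exp u = 1 := by rw [← Real.exp_add]; simp
  have h3 : (1 - Real.exp (-u)) * Real.exp u = Real.exp u - 1 := by
    linear_combination -h2
  calc |1 - Real.exp (-u)| * Real.exp u
      = |1 - Real.exp (-u)| * |Real.exp u| := by rw [abs_of_pos (Real.exp_pos u)]
    _ = |(1 - Real.exp (-u)) * Real.exp u| := (abs_mul _ _).symm
    _ = |Real.exp u - 1| := by rw [h3]

lemma ar14 (P σ : ℝ) (hP : 0 < P) (hσ : 0 < σ) (hσ1 : σ < 1/1000)
    (hPub : P ≤ 1+2*σ) : |P - 1| * P ≤ 1/4+3*σ := by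
  rcases le_or_gt P 1 with h|h
  · rw [abs_of_nonpos (by linarith)]
    nlinarith [sq_nonneg (P - 1/2)]
  · rw [abs_of_pos (by linarith)]
    nlinarith

lemma arMul (G W P Pi R σ S : ℝ) (hσ0 : 0 < σ) (hG0 : 0 ≤ G) (hW0 : 0 ≤ W)
    (hP0 : 0 < P) (hPi0 : 0 < Pi) (hPPi : P*Pi = 1) (hG : G ≤ 1+7*σ)
    (hW : W ≤ 7*σ + (R + Pi*(24*σ))) (hR0 : 0 ≤ R) (hS : S = (G*W)*(P*P)) :
    S ≤ (1+7*σ)*(7*σ*(P*P) + (R*P)*P + 24*σ*P) := by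
  have h1 : G*W ≤ (1+7*σ)*(7*σ + (R + Pi*(24*σ))) :=
    mul_le_mul hG hW hW0 (by linarith)
  have h2 : (7*σ + (R + Pi*(24*σ)))*(P*P) = 7*σ*(P*P) + (R*P)*P + 24*σ*P := by
    linear_combination (24*σ*P) * hPPi
  calc S = (G*W)*(P*P) := hS
    _ ≤ ((1+7*σ)*(7*σ + (R + Pi*(24*σ))))*(P*P) :=
        mul_le_mul_of_nonneg_right h1 (by positivity)
    _ = (1+7*σ)*((7*σ + (R + Pi*(24*σ)))*(P*P)) := by ring
    _ = (1+7*σ)*(7*σ*(P*P) + (R*P)*P + 24*σ*P) := by rw [h2]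

lemma arFin1 (S P σ A : ℝ) (hσ0 : 0 < σ) (hσ1 : σ < 1/1000) (hP0 : 0 < P)
    (hPub : P ≤ 1+2*σ) (hA : A ≤ 1/4+3*σ) (hA0 : 0 ≤ A)
    (h : S ≤ (1+7*σ)*(7*σ*(P*P) + A + 24*σ*P)) : S ≤ 1/4 + 80*σ := by
  have hσσ : σ*σ ≤ σ/1000 := by nlinarith
  have hPP : P*P ≤ (1+2*σ)*(1+2*σ) := by nlinarith
  have h1 : 7*σ*(P*P) ≤ 8*σ := by nlinarith
  have h2 : 24*σ*P ≤ 25*σ := by nlinarith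
  have h3 : 7*σ*(P*P) + A + 24*σ*P ≤ 1/4 + 36*σ := by linarith
  have h4 : (1+7*σ)*(7*σ*(P*P)+A+24*σ*P) ≤ (1+7*σ)*(1/4+36*σ) :=
    mul_le_mul_of_nonneg_left h3 (by linarith)
  have h5 : S ≤ (1+7*σ)*(7*σ*(P*P)+A+24*σ*P) := by linarith [h]
  nlinarith [h4, h5, hσσ]

lemma arFin2 (N δ' : ℝ) (hδ'pos : 0 < δ') (hδ'1 : δ' ≤ 1)
    (h1 : (1/2)*Real.exp δ' < N) : 1/4 + δ'/2 < N*N := by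
  nlinarith [Real.add_one_le_exp δ', Real.exp_pos δ']
set_option maxHeartbeats 3000000 in
theorem stmt_0 :
    ∀ δ : ℝ, 0 < δ → ∃ η₁ : ℝ, 0 < η₁ ∧
      ∀ η : ℝ, 0 < η → η < η₁ →
        ∀ s : ℂ, f η s ^ 2 - f η s * Complex.exp (-s) - 1 = 0 →
          s.re ≤ -Real.log 2 + δ := by
  intro δ hδ
  set δ' := min δ 1 with hδ'def
  have hδ'pos : 0 < δ' := lt_min hδ one_pos
  have hδ'1 : δ' ≤ 1 := min_le_right δ 1
  have hδ'δ : δ' ≤ δ := min_le_left δ 1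
  clear_value δ'
  refine ⟨min (1/100) ((δ'/1000)^2), by positivity, ?_⟩
  intro η hη hη₁ s heq
  by_contra hcon
  push_neg at hcon
  have hη100 : η < 1/100 := hη₁.trans_le (min_le_left _ _)
  have hηδ : η < (δ'/1000)^2 := hη₁.trans_le (min_le_right _ _)
  set σ := Real.sqrt η with hσdef
  have hσpos : 0 < σ := Real.sqrt_pos.mpr hη
  have hσsq : σ*σ = η := Real.mul_self_sqrt hη.le
  clear_value σ
  have hσδ : σ < δ'/1000 := by nlinarith
  have hσ1000 : σ < 1/1000 := by nlinarith
  have hlog2 : Real.log 2 < 0.7 := by linarith [Real.log_two_lt_d9]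
  have hlog2pos : 0 < Real.log 2 := Real.log_pos (by norm_num)
  have hsre : -Real.log 2 + δ' < s.re := by
    have : -Real.log 2 + δ' ≤ -Real.log 2 + δ := by linarith
    linarith
  have hsre_lb : -(0.7:ℝ) < s.re := by linarith
  -- Part A : bounds on |f| from the characteristic equation
  have hη0 : (η:ℂ) ≠ 0 := by exact_mod_cast hη.ne'
  have hfne : f η s ≠ 0 := by intro h; rw [h] at heq; norm_num at heq
  have heq1 : f η s * (f η s - Complex.exp (-s)) = 1 := by linear_combination heq
  have habs1 : ‖f η s‖ * ‖f η s - Complex.exp (-s)‖ = 1 := by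
    rw [← norm_mul, heq1, norm_one]
  have habsexp : ‖Complex.exp (-s)‖ = Real.exp (-s.re) := by
    rw [Complex.norm_exp]; simp
  have hE2 : Real.exp (-s.re) < 2 := by
    rw [show (2:ℝ) = Real.exp (Real.log 2) from (Real.exp_log two_pos).symm]
    exact Real.exp_lt_exp.mpr (by linarith)
  have hFpos : 0 < ‖f η s‖ := norm_pos_iff.mpr hfne
  have hfub : ‖f η s‖ ≤ 5/2 := by
    have hsq : f η s ^ 2 = 1 + f η s * Complex.exp (-s) := by linear_combination heq
    have h1 : ‖f η s‖ ^ 2 ≤ 1 + ‖f η s‖ * Real.exp (-s.re) := by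
      calc ‖f η s‖ ^ 2 = ‖f η s ^ 2‖ := (norm_pow _ _).symm
        _ = ‖1 + f η s * Complex.exp (-s)‖ := by rw [hsq]
        _ ≤ ‖1‖ + ‖f η s * Complex.exp (-s)‖ := norm_add_le _ _
        _ = 1 + ‖f η s‖ * Real.exp (-s.re) := by rw [norm_one, norm_mul, habsexp]
    nlinarith [Real.exp_pos (-s.re)]
  have hflb : 2/5 < ‖f η s‖ := by
    have h1 : ‖f η s - Complex.exp (-s)‖ ≤ ‖f η s‖ + Real.exp (-s.re) := by
      calc ‖f η s - Complex.exp (-s)‖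
          ≤ ‖f η s‖ + ‖Complex.exp (-s)‖ := norm_sub_le _ _
        _ = ‖f η s‖ + Real.exp (-s.re) := by rw [habsexp]
    nlinarith [Real.exp_pos (-s.re)]
  -- Part B : square root and coordinates
  have ha : (1 + 4*(η:ℂ)*s) ≠ 0 := by
    intro h
    apply hfne
    rw [f, lam1, lam2, h, Complex.zero_cpow (by norm_num : ((1:ℂ)/2) ≠ 0)]
    simp
  set r : ℂ := (1 + 4 * (η : ℂ) * s) ^ ((1 : ℂ) / 2) with hrdef
  set z : ℂ := (r - 1) / (2 * (η:ℂ)) with hzdef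
  set w : ℂ := (η:ℂ) * (z*z) with hwdef
  set E : ℂ := Complex.exp (-(2*z) - (1/η : ℂ)) with hEdef
  set Dd : ℂ := (1 + r) - (1 - r) * E with hDddef
  have hform : f η s = 2*r*Complex.exp (-z) / Dd := by
    rw [hDddef, hEdef]; exact f_formula η hη s r z hrdef hzdef
  have hDne : Dd ≠ 0 := by intro h; apply hfne; rw [hform, h, div_zero]
  have hr2 : r * r = 1 + 4*(η:ℂ)*s := by rw [hrdef]; exact sqrt_mul_self' _ ha
  have hrz : r = 1 + 2*(η:ℂ)*z := by
    rw [hzdef]; field_simp; ring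
  have hs_decomp : s = z + w := by
    have hz2 : 2*(η:ℂ)*z = r - 1 := by rw [hzdef]; field_simp
    rw [hwdef]
    have h4 : (4*(η:ℂ)) ≠ 0 := by simpa using hη0
    apply mul_left_cancel₀ h4
    linear_combination (-1 : ℂ)*hr2 - (2*(η:ℂ)*z + r + 1) * hz2
  clear_value r z w E Dd
  set ρ := r.re with hρdef
  set τ := r.im with hτdef
  set x := z.re with hxdef
  set y := z.im with hydef
  set u := w.re with hudef
  set v := w.im with hvdef
  have hρ0 : 0 ≤ ρ := by rw [hρdef, hrdef]; exact re_sqrt_nonneg _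
  have hrz' : r = 1 + ((2*η : ℝ):ℂ) * z := by rw [hrz]; push_cast; ring
  have hρx : ρ = 1 + 2*η*x := by
    have h := congrArg Complex.re hrz'
    simp only [Complex.add_re, Complex.one_re, Complex.re_ofReal_mul] at h
    rw [hρdef, hxdef]; linarith [h]
  have hτy : τ = 2*η*y := by
    have h := congrArg Complex.im hrz'
    simp only [Complex.add_im, Complex.one_im, Complex.im_ofReal_mul] at h
    rw [hτdef, hydef]; linarith [h]
  have hux : u = η*(x*x - y*y) := by
    have h : w.re = η * (z*z).re := by rw [hwdef, Complex.re_ofReal_mul]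
    rw [Complex.mul_re] at h
    rw [hudef, hxdef, hydef]; exact h
  have hvy : v = η*(x*y + y*x) := by
    have h : w.im = η * (z*z).im := by rw [hwdef, Complex.im_ofReal_mul]
    rw [Complex.mul_im] at h
    rw [hvdef, hxdef, hydef]; exact h
  have hre2 : ρ*ρ - τ*τ = 1 + 4*η*s.re := by
    have hr2' : r*r = (1:ℂ) + ((4*η:ℝ):ℂ)*s := by rw [hr2]; push_cast; ring
    have h := congrArg Complex.re hr2'
    simp only [Complex.mul_re, Complex.add_re, Complex.one_re, Complex.re_ofReal_mul,
      Complex.ofReal_re, Complex.ofReal_im, zero_mul, sub_zero] at h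
    rw [hρdef, hτdef]; linarith [h]
  clear_value ρ τ x y u v
  -- Part C : magnitude bounds
  have hρτ : (0.97:ℝ) ≤ ρ*ρ - τ*τ := by
    rw [hre2]
    have h1 : 0 ≤ η*(s.re+0.7) := mul_nonneg hη.le (by linarith)
    linarith [h1]
  have hρ9 : (0.9:ℝ) ≤ ρ := arρ9 ρ τ hρ0 hρτ
  have habsr_sq : ‖r‖ * ‖r‖ = ρ*ρ + τ*τ := by
    rw [← sq, ← Complex.normSq_eq_norm_sq, Complex.normSq_apply, hρdef, hτdef]
  have habsr_ub : ‖r‖ ≤ 1.5*ρ :=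
    arAub (‖r‖) ρ τ (norm_nonneg r) habsr_sq hρτ hρ0
  have habsr_lb : ρ ≤ ‖r‖ := by rw [hρdef]; exact Complex.re_le_norm r
  have habs1r : 1 + ρ ≤ ‖1+r‖ := by
    have h := Complex.re_le_norm (1+r)
    simp only [Complex.add_re, Complex.one_re] at h
    rw [hρdef]; exact h
  have habs1r' : ‖1 - r‖ ≤ 3*ρ := by
    calc ‖1-r‖ ≤ ‖1‖ + ‖r‖ := norm_sub_le _ _
      _ ≤ 3*ρ := by rw [norm_one]; linarith
  have hEabs : ‖E‖ = Real.exp (-(ρ/η)) := by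
    rw [hEdef, Complex.norm_exp]
    congr 1
    have hc : (1/(η:ℂ)) = ((1/η : ℝ) : ℂ) := by push_cast; ring
    rw [hc]
    simp only [Complex.sub_re, Complex.neg_re, Complex.ofReal_re]
    have h2z : (2*z).re = 2*x := by
      rw [show (2*z) = ((2:ℝ):ℂ)*z by push_cast; ring, Complex.re_ofReal_mul, hxdef]
    rw [h2z, hρx]
    field_simp
    ring
  have hB : ‖1-r‖ * ‖E‖ ≤ η := by
    rw [hEabs]
    calc ‖1-r‖ * Real.exp (-(ρ/η)) ≤ (3*ρ) * Real.exp (-(ρ/η)) :=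
          mul_le_mul_of_nonneg_right habs1r' (Real.exp_nonneg _)
      _ ≤ η := aux_exp_small ρ η hη (le_of_lt hη100) hρ9
  have hEone : ‖E‖ ≤ 1 := by
    rw [hEabs, ← Real.exp_zero]
    apply Real.exp_le_exp.mpr
    have : 0 ≤ ρ/η := by positivity
    linarith
  have hDd_lb : 1 + ρ - η ≤ ‖Dd‖ := by
    rw [hDddef]
    calc 1 + ρ - η ≤ ‖1+r‖ - ‖(1-r)*E‖ := by
          rw [norm_mul]; linarith
      _ ≤ ‖(1+r) - (1-r)*E‖ := norm_sub_norm_le _ _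
  have hDd_ub : ‖Dd‖ ≤ 3*ρ := by
    rw [hDddef]
    calc ‖(1+r) - (1-r)*E‖ ≤ ‖1+r‖ + ‖(1-r)*E‖ :=
          norm_sub_le _ _
      _ ≤ (1 + 1.5*ρ) + η := by
          rw [norm_mul]
          have h1 : ‖1+r‖ ≤ 1 + 1.5*ρ := by
            calc ‖1+r‖ ≤ ‖1‖ + ‖r‖ := norm_add_le _ _
              _ ≤ 1 + 1.5*ρ := by rw [norm_one]; linarith
          linarith
      _ ≤ 3*ρ := by linarith
  -- Part D : g = f * exp z
  set g : ℂ := f η s * Complex.exp z with hgdef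
  clear_value g
  have hzexp : Complex.exp z * Complex.exp (-z) = 1 := by
    rw [← Complex.exp_add]; simp
  have hfg : f η s = g * Complex.exp (-z) := by
    rw [hgdef, mul_assoc, hzexp, mul_one]
  have hgDd : g * Dd = 2*r := by
    rw [hgdef, hform]
    field_simp
    linear_combination r * hzexp
  have habsg_eq : ‖g‖ * ‖Dd‖ = 2 * ‖r‖ := by
    rw [← norm_mul, hgDd, norm_mul, Complex.norm_two]
  have hGpair := arG (‖g‖) (‖Dd‖) (‖r‖) ρ η hη
    (le_of_lt hη100) hρ9 (norm_nonneg g) habsr_lb habsr_ub hDd_lb hDd_ub habsg_eq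
  have hG3 : ‖g‖ ≤ 3 := hGpair.1
  have hG23 : 2/3 ≤ ‖g‖ := hGpair.2
  have habsf : ‖f η s‖ = ‖g‖ * Real.exp (-x) := by
    rw [hfg, norm_mul, Complex.norm_exp, Complex.neg_re, hxdef]
  -- bounds on x
  have hexp3 : (15:ℝ) < Real.exp 3 := arExp3
  have hexp33 : Real.exp (-3) * Real.exp 3 = 1 := by rw [← Real.exp_add]; norm_num
  have hXpair := arX (‖f η s‖) (‖g‖) (Real.exp (-x))
    hflb hfub hG3 hG23 (Real.exp_pos _) habsf
  have hx3 : x ≤ 3 := by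
    have h1 : Real.exp (-3) < 2/15 := arInv (Real.exp (-3)) (Real.exp 3) hexp33 hexp3 (Real.exp_pos _)
    have h2 : Real.exp (-3) < Real.exp (-x) := by linarith [hXpair.1]
    have h3 := Real.exp_lt_exp.mp h2
    linarith
  have hx3' : -3 ≤ x := by
    have h2 : Real.exp (-x) < Real.exp 3 := by linarith [hXpair.2]
    have h3 := Real.exp_lt_exp.mp h2
    linarith
  -- Part D' : τ and r-1 bounds
  have hτsq : τ*τ ≤ 16*η := arτ ρ τ x η s.re hη (le_of_lt hη100) hre2 hρx hx3 hx3' hsre_lb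
  have habsr1_sq : ‖r-1‖ * ‖r-1‖ = (ρ-1)*(ρ-1) + τ*τ := by
    rw [← sq, ← Complex.normSq_eq_norm_sq, Complex.normSq_apply, Complex.sub_re, Complex.sub_im,
      Complex.one_re, Complex.one_im, sub_zero, hρdef, hτdef]
  have habsr1 : ‖r-1‖ ≤ 5*σ :=
    arR1 (‖r-1‖) ρ τ x η σ hη (le_of_lt hη100) hσsq hσpos
      (norm_nonneg _) habsr1_sq hρx hx3 hx3' hτsq
  have hg1id : (g - 1) * Dd = (r - 1) * (1 - E) := by
    linear_combination hgDd - hDddef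
  have habs1E : ‖1 - E‖ ≤ 2 := by
    calc ‖1-E‖ ≤ ‖1‖ + ‖E‖ := norm_sub_le _ _
      _ ≤ 2 := by rw [norm_one]; linarith
  have hg1 : ‖g-1‖ ≤ 7*σ := by
    have h1 : ‖g-1‖ * ‖Dd‖ = ‖r-1‖ * ‖1-E‖ := by
      rw [← norm_mul, hg1id, norm_mul]
    exact arg1 (‖g-1‖) (‖Dd‖) (‖r-1‖) (‖1-E‖)
      σ η ρ hη (le_of_lt hη100) hρ9 hσpos hσsq (norm_nonneg _) (norm_nonneg _)
      (norm_nonneg _) h1 habsr1 habs1E hDd_lb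
  -- Part E : w bounds
  have hy2 : (η*y)*(η*y) ≤ 4*(σ*σ) := ary τ η y σ hτy hτsq hσsq
  have hub : u ≤ 9*η := aru u η x y hη hux hx3 hx3'
  have hvb : |v| ≤ 12*σ := arv v η x y σ hσsq hσpos hvy hx3 hx3' hy2
  have hPinv : Real.exp u * Real.exp (-u) = 1 := by rw [← Real.exp_add]; simp
  have hPub : Real.exp u ≤ 1+2*σ :=
    arP (Real.exp u) u σ η hη hσsq hσpos hσ1000 (Real.exp_pos u) (arPu u) hub
  have hwsplit : Complex.exp (-w) = Complex.exp ((-u:ℝ):ℂ) * Complex.exp (((-v:ℝ):ℂ) * Complex.I) := by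
    rw [← Complex.exp_add]
    congr 1
    have h1 : w = (u:ℂ) + (v:ℂ) * Complex.I := by
      rw [hudef, hvdef]; exact (Complex.re_add_im w).symm
    rw [h1]; push_cast; ring
  have hQ : ‖1 - Complex.exp (-w)‖ ≤ |1 - Real.exp (-u)| + Real.exp (-u) * (24*σ) := by
    have e1 : ‖1 - Complex.exp ((-u:ℝ):ℂ)‖ = |1 - Real.exp (-u)| := by
      rw [← Complex.ofReal_exp, ← Complex.ofReal_one, ← Complex.ofReal_sub, Complex.norm_real, Real.norm_eq_abs]
    have e2 : ‖Complex.exp ((-u:ℝ):ℂ) - Complex.exp (-w)‖ ≤ Real.exp (-u) * (24*σ) := by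
      rw [hwsplit]
      have hsplit2 : Complex.exp ((-u:ℝ):ℂ) - Complex.exp ((-u:ℝ):ℂ) * Complex.exp (((-v:ℝ):ℂ) * Complex.I)
          = Complex.exp ((-u:ℝ):ℂ) * (1 - Complex.exp (((-v:ℝ):ℂ) * Complex.I)) := by ring
      rw [hsplit2, norm_mul]
      have h1 : ‖Complex.exp ((-u:ℝ):ℂ)‖ = Real.exp (-u) := by
        rw [Complex.norm_exp, Complex.ofReal_re]
      have habsvI : ‖((-v:ℝ):ℂ) * Complex.I‖ = |v| := by
        rw [norm_mul, Complex.norm_I, mul_one, Complex.norm_real, Real.norm_eq_abs, abs_neg]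
      have h2 : ‖1 - Complex.exp (((-v:ℝ):ℂ) * Complex.I)‖ ≤ 2*|v| := by
        rw [show (1 - Complex.exp (((-v:ℝ):ℂ) * Complex.I))
            = -(Complex.exp (((-v:ℝ):ℂ) * Complex.I) - 1) by ring, norm_neg]
        calc ‖Complex.exp (((-v:ℝ):ℂ) * Complex.I) - 1‖
            ≤ 2 * ‖((-v:ℝ):ℂ) * Complex.I‖ := by
              apply Complex.norm_exp_sub_one_le
              rw [habsvI]; linarith [hvb, hσ1000]
          _ = 2*|v| := by rw [habsvI]
      rw [h1]
      calc Real.exp (-u) * ‖1 - Complex.exp (((-v:ℝ):ℂ) * Complex.I)‖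
          ≤ Real.exp (-u) * (2*|v|) := by
            apply mul_le_mul_of_nonneg_left h2 (Real.exp_nonneg _)
        _ ≤ Real.exp (-u) * (24*σ) := by
            apply mul_le_mul_of_nonneg_left (by linarith) (Real.exp_nonneg _)
    calc ‖1 - Complex.exp (-w)‖
        ≤ ‖1 - Complex.exp ((-u:ℝ):ℂ)‖ + ‖Complex.exp ((-u:ℝ):ℂ) - Complex.exp (-w)‖ :=
          norm_sub_le_norm_sub_add_norm_sub 1 _ _
      _ ≤ |1 - Real.exp (-u)| + Real.exp (-u) * (24*σ) := by rw [e1]; linarith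
  -- Part F : final contradiction
  have hgw : g - Complex.exp (-w) = Complex.exp z * (f η s - Complex.exp (-s)) := by
    have hes : Complex.exp (-s) = Complex.exp (-z) * Complex.exp (-w) := by
      rw [← Complex.exp_add]; congr 1; rw [hs_decomp]; ring
    rw [hes]
    linear_combination hgdef + Complex.exp (-w) * hzexp
  have habsG : ‖g‖ = ‖f η s‖ * Real.exp x := by
    rw [hgdef, norm_mul, Complex.norm_exp, hxdef]
  have habsGW : ‖g - Complex.exp (-w)‖ = Real.exp x * ‖f η s - Complex.exp (-s)‖ := by
    rw [hgw, norm_mul, Complex.norm_exp, hxdef]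
  have hkey : ‖g‖ * ‖g - Complex.exp (-w)‖ = Real.exp x * Real.exp x := by
    rw [habsG, habsGW]
    linear_combination (Real.exp x * Real.exp x) * habs1
  have hGub : ‖g‖ ≤ 1+7*σ := by
    calc ‖g‖ = ‖(g-1) + 1‖ := by rw [sub_add_cancel]
      _ ≤ ‖g-1‖ + ‖1‖ := norm_add_le _ _
      _ ≤ 1+7*σ := by rw [norm_one]; linarith
  have hW : ‖g - Complex.exp (-w)‖ ≤ 7*σ + (|1 - Real.exp (-u)| + Real.exp (-u)*(24*σ)) := by
    calc ‖g - Complex.exp (-w)‖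
        ≤ ‖g-1‖ + ‖1 - Complex.exp (-w)‖ := norm_sub_le_norm_sub_add_norm_sub g 1 _
      _ ≤ 7*σ + (|1 - Real.exp (-u)| + Real.exp (-u)*(24*σ)) := by linarith
  have hsxu : s.re = x + u := by
    rw [hxdef, hudef]
    have h := congrArg Complex.re hs_decomp
    simpa using h
  have hS : Real.exp s.re * Real.exp s.re
      = (‖g‖ * ‖g - Complex.exp (-w)‖) * (Real.exp u * Real.exp u) := by
    rw [hkey, hsxu, Real.exp_add]; ring
  have hmain := arMul (‖g‖) (‖g - Complex.exp (-w)‖) (Real.exp u)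
    (Real.exp (-u)) (|1 - Real.exp (-u)|) σ (Real.exp s.re * Real.exp s.re)
    hσpos (norm_nonneg g) (norm_nonneg _) (Real.exp_pos u) (Real.exp_pos (-u))
    hPinv hGub hW (abs_nonneg _) hS
  rw [arRP u] at hmain
  have h14 : |Real.exp u - 1| * Real.exp u ≤ 1/4 + 3*σ :=
    ar14 (Real.exp u) σ (Real.exp_pos u) hσpos hσ1000 hPub
  have hfin1 : Real.exp s.re * Real.exp s.re ≤ 1/4 + 80*σ :=
    arFin1 (Real.exp s.re * Real.exp s.re) (Real.exp u) σ (|Real.exp u - 1| * Real.exp u)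
      hσpos hσ1000 (Real.exp_pos u) hPub h14 (by positivity) hmain
  have hlow : (1/2)*Real.exp δ' < Real.exp s.re := by
    have h1 : Real.exp (-Real.log 2 + δ') < Real.exp s.re := Real.exp_lt_exp.mpr hsre
    have h2 : Real.exp (-Real.log 2 + δ') = (1/2)*Real.exp δ' := by
      rw [Real.exp_add, Real.exp_neg, Real.exp_log two_pos]; ring
    linarith
  have hfin2 : 1/4 + δ'/2 < Real.exp s.re * Real.exp s.re :=
    arFin2 (Real.exp s.re) δ' hδ'pos hδ'1 hlow
  linarith
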